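/- (Pigeonhole blocking argument) Let S be a finite set of k real numbers in (0,1), and for each positive integer n let 𝒫_n = {x ∈ ℝ : ∃ m ∈ {1,…,n−1}, |x − m/n| < C/n²} for a fixed constant C > 0. Suppose every element of S is irrational and δ > 0 is the distance from S to the set of fractions with denominators Q, 2Q, …, kQ, for some positive integer Q. Then for all sufficiently large N, there exists i ∈ {0,…,k} such that S ∩ 𝒫_{n_i} = ∅, where n_i = 1 + (N+i)Q. -/

import Mathlib

/-- Pigeonhole blocking argument: if S ⊂ (0,1) is a finite set of k irrational numbers
at distance δ > 0 from all fractions with denominators Q, 2Q, …, kQ, then for all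
sufficiently large N there is i ∈ {0,…,k} with S ∩ 𝒫_{nᵢ} = ∅, nᵢ = 1+(N+i)Q, where
𝒫_n = {x : ∃ m ∈ {1,…,n−1}, |x − m/n| < C/n²}. -/
theorem stmt_6 (S : Finset ℝ) (k : ℕ) (hcard : S.card = k)
    (hS : ∀ t ∈ S, t ∈ Set.Ioo (0 : ℝ) 1) (hirr : ∀ t ∈ S, Irrational t)
    (C : ℝ) (hC : 0 < C) (Q : ℕ) (hQ : 0 < Q) (δ : ℝ) (hδpos : 0 < δ)
    (hδ : ∀ t ∈ S, ∀ j ∈ Finset.Icc 1 k, ∀ a : ℤ, δ ≤ |t - (a : ℝ) / ((j * Q : ℕ) : ℝ)|) :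
    ∃ N₀ : ℕ, ∀ N ≥ N₀, ∃ i ≤ k, ∀ t ∈ S,
      ¬ ∃ m : ℤ, 1 ≤ m ∧ m ≤ ((1 + (N + i) * Q : ℕ) : ℤ) - 1 ∧
          |t - (m : ℝ) / ((1 + (N + i) * Q : ℕ) : ℝ)| < C / ((1 + (N + i) * Q : ℕ) : ℝ) ^ 2 := by
  obtain ⟨N₀, hN₀⟩ := exists_nat_gt (2 * C / δ)
  refine ⟨N₀, fun N hN => ?_⟩
  by_contra hcon
  push_neg at hcon
  -- key claim: a given t cannot be blocked at two different indices
  have key : ∀ i i' : ℕ, i < i' → i' ≤ k → ∀ t ∈ S,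
      (∃ m : ℤ, 1 ≤ m ∧ m ≤ ((1 + (N + i) * Q : ℕ) : ℤ) - 1 ∧
        |t - (m : ℝ) / ((1 + (N + i) * Q : ℕ) : ℝ)| < C / ((1 + (N + i) * Q : ℕ) : ℝ) ^ 2) →
      (∃ m : ℤ, 1 ≤ m ∧ m ≤ ((1 + (N + i') * Q : ℕ) : ℤ) - 1 ∧
        |t - (m : ℝ) / ((1 + (N + i') * Q : ℕ) : ℝ)| < C / ((1 + (N + i') * Q : ℕ) : ℝ) ^ 2) →
      False := by
    intro i i' hii hi'k t htS ⟨m, _, _, hm⟩ ⟨m', _, _, hm'⟩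
    set n : ℕ := 1 + (N + i) * Q with hn
    set n' : ℕ := 1 + (N + i') * Q with hn'
    have hnpos : (0 : ℝ) < n := by positivity
    have hn'pos : (0 : ℝ) < n' := by positivity
    have hnn' : (n : ℝ) ≤ n' := by
      have : n ≤ n' := by
        apply Nat.add_le_add_left
        exact Nat.mul_le_mul_right Q (Nat.add_le_add_left hii.le N)
      exact_mod_cast this
    have h1 : |t * n - m| < C / n := by
      have : |t - (m : ℝ) / n| * n < C / n ^ 2 * n :=
        (mul_lt_mul_iff_of_pos_right hnpos).mpr hm
      calc |t * n - m| = |t - (m : ℝ) / n| * n := by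
            rw [← abs_of_pos hnpos, ← abs_mul]
            congr 1
            field_simp
            rw [abs_of_pos hnpos]; ring
        _ < C / n ^ 2 * n := this
        _ = C / n := by field_simp
    have h2 : |t * n' - m'| < C / n' := by
      have : |t - (m' : ℝ) / n'| * n' < C / n' ^ 2 * n' :=
        (mul_lt_mul_iff_of_pos_right hn'pos).mpr hm'
      calc |t * n' - m'| = |t - (m' : ℝ) / n'| * n' := by
            rw [← abs_of_pos hn'pos, ← abs_mul]
            congr 1
            field_simp
            rw [abs_of_pos hn'pos]; ring
        _ < C / n' ^ 2 * n' := this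
        _ = C / n' := by field_simp
    set j : ℕ := i' - i with hj
    have hjpos : 1 ≤ j := Nat.le_sub_of_add_le (by omega)
    have hjk : j ≤ k := by omega
    have hnat : n + j * Q = n' := by
      rw [hn, hn']
      have hij : i' = i + j := by omega
      rw [hij]; ring
    have hD : ((j * Q : ℕ) : ℝ) = (n' : ℝ) - n := by
      push_cast [← hnat]; ring
    have hDpos : (0 : ℝ) < ((j * Q : ℕ) : ℝ) := by
      have : 0 < j * Q := Nat.mul_pos hjpos hQ
      exact_mod_cast this
    have h3 : |t * ((j * Q : ℕ) : ℝ) - ((m' - m : ℤ) : ℝ)| < 2 * C / n := by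
      have : t * ((j * Q : ℕ) : ℝ) - ((m' - m : ℤ) : ℝ)
          = (t * n' - m') - (t * n - m) := by rw [hD]; push_cast; ring
      rw [this]
      calc |(t * n' - m') - (t * n - m)| ≤ |t * n' - m'| + |t * n - m| := abs_sub _ _
        _ < C / n' + C / n := by exact add_lt_add h2 h1
        _ ≤ C / n + C / n := by
            gcongr
        _ = 2 * C / n := by ring
    have h4 : δ ≤ |t - ((m' - m : ℤ) : ℝ) / ((j * Q : ℕ) : ℝ)| :=
      hδ t htS j (Finset.mem_Icc.mpr ⟨hjpos, hjk⟩) (m' - m)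
    have h5 : |t - ((m' - m : ℤ) : ℝ) / ((j * Q : ℕ) : ℝ)|
        = |t * ((j * Q : ℕ) : ℝ) - ((m' - m : ℤ) : ℝ)| / ((j * Q : ℕ) : ℝ) := by
      have heq : t - ((m' - m : ℤ) : ℝ) / ((j * Q : ℕ) : ℝ)
          = (t * ((j * Q : ℕ) : ℝ) - ((m' - m : ℤ) : ℝ)) / ((j * Q : ℕ) : ℝ) := by
        field_simp
      rw [heq, abs_div, abs_of_pos hDpos]
    have h6 : δ ≤ 2 * C / n := by
      have hd1 : |t * ((j * Q : ℕ) : ℝ) - ((m' - m : ℤ) : ℝ)| / ((j * Q : ℕ) : ℝ)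
          ≤ |t * ((j * Q : ℕ) : ℝ) - ((m' - m : ℤ) : ℝ)| := by
        apply div_le_self (abs_nonneg _)
        exact_mod_cast Nat.one_le_iff_ne_zero.mpr (Nat.mul_pos hjpos hQ).ne'
      linarith [h4, h5 ▸ h4, hd1, h3]
    -- but 2C/n < δ since n > 2C/δ
    have hnbig : 2 * C / δ < (n : ℝ) := by
      have : (N₀ : ℝ) ≤ n := by
        have : N₀ ≤ n := by
          calc N₀ ≤ N := hN
            _ ≤ N * Q := Nat.le_mul_of_pos_right N hQ
            _ ≤ 1 + (N + i) * Q := by nlinarith [Nat.zero_le i, hQ]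
        exact_mod_cast this
      linarith
    have : 2 * C / n < δ := by
      rw [div_lt_iff₀ hnpos]
      rw [div_lt_iff₀ hδpos] at hnbig
      linarith [hnbig]
    linarith
  -- choice + pigeonhole
  have h' : ∀ i ∈ Finset.range (k + 1), ∃ t ∈ S,
      ∃ m : ℤ, 1 ≤ m ∧ m ≤ ((1 + (N + i) * Q : ℕ) : ℤ) - 1 ∧
        |t - (m : ℝ) / ((1 + (N + i) * Q : ℕ) : ℝ)| < C / ((1 + (N + i) * Q : ℕ) : ℝ) ^ 2 := by
    intro i hi
    exact hcon i (Nat.lt_succ_iff.mp (Finset.mem_range.mp hi))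
  choose! f hfS hfP using h'
  have hmaps : ∀ i ∈ Finset.range (k + 1), f i ∈ S := fun i hi => hfS i hi
  have hlt : S.card < (Finset.range (k + 1)).card := by
    rw [hcard, Finset.card_range]; omega
  obtain ⟨x, hx, y, hy, hxy, hfxy⟩ :=
    Finset.exists_ne_map_eq_of_card_lt_of_maps_to hlt hmaps
  rcases hxy.lt_or_gt with h | h
  · exact key x y h (Nat.lt_succ_iff.mp (Finset.mem_range.mp hy)) (f x) (hfS x hx)
      (hfP x hx) (hfxy ▸ hfP y hy)
  · exact key y x h (Nat.lt_succ_iff.mp (Finset.mem_range.mp hx)) (f y) (hfS y hy)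
      (hfP y hy) (hfxy ▸ hfP x hx)
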